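/- Consider a K-user MISO interference channel with channel vectors h_{kl} ∈ ℂ^N for 1 ≤ k,l ≤ K. For a tuple Q = (Q_1,…,Q_K) of N×N complex Hermitian positive semidefinite matrices with tr(Q_k) ≤ 1 for all k (an admissible tuple), define the power gains x_{l,k}(Q_l) = h_{lk}^H Q_l h_{lk} and the receive power gain vectors x^k(Q) = (x_{1,k}(Q_1), …, x_{K,k}(Q_K)) ∈ ℝ_+^K. Let u_1,…,u_K : ℝ_+^K → ℝ_+ be user utility functions such that u_k is strictly increasing in its k-th argument and strictly decreasing in each other argument, and let 𝒰 = {(u_1(x^1(Q)),…,u_K(x^K(Q))) : Q admissible} be the utility region. Then every Pareto optimal point of 𝒰 is achieved by an admissible tuple (Q_1,…,Q_K) in which every Q_k has rank at most one, i.e., Q_k = w_k w_k^H for some w_k ∈ ℂ^N with ‖w_k‖ ≤ 1. -/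

import Mathlib

open Matrix
open scoped ComplexOrder

/-- The power gain `hᴴ Q h` (a real number for Hermitian `Q`). -/
noncomputable def powerGain {N : ℕ} (Q : Matrix (Fin N) (Fin N) ℂ) (h : Fin N → ℂ) : ℝ :=
  (star h ⬝ᵥ Q.mulVec h).re

/-- An admissible tuple of transmit correlation matrices: each `Q k` is
Hermitian positive semidefinite with trace at most one. -/
def Admissible {N K : ℕ} (Q : Fin K → Matrix (Fin N) (Fin N) ℂ) : Prop :=
  ∀ k, (Q k).PosSemidef ∧ (Q k).trace.re ≤ 1

namespace Matrix.PosSemidef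
open scoped MatrixOrder

noncomputable def sqrt {N : ℕ} {Q : Matrix (Fin N) (Fin N) ℂ} (_hQ : Q.PosSemidef) :
    Matrix (Fin N) (Fin N) ℂ := CFC.sqrt Q

lemma sq_sqrt {N : ℕ} {Q : Matrix (Fin N) (Fin N) ℂ} (hQ : Q.PosSemidef) :
    hQ.sqrt ^ 2 = Q := CFC.sq_sqrt Q hQ.nonneg

lemma posSemidef_sqrt {N : ℕ} {Q : Matrix (Fin N) (Fin N) ℂ} (hQ : Q.PosSemidef) :
    hQ.sqrt.PosSemidef := (CFC.sqrt_nonneg Q).posSemidef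

end Matrix.PosSemidef


lemma dot_cs {n : ℕ} (x y : Fin n → ℂ) :
    Complex.normSq (star x ⬝ᵥ y) ≤ (∑ i, Complex.normSq (x i)) * (∑ i, Complex.normSq (y i)) := by
  let x' : EuclideanSpace ℂ (Fin n) := WithLp.toLp 2 x
  let y' : EuclideanSpace ℂ (Fin n) := WithLp.toLp 2 y
  have h1 : (inner (𝕜 := ℂ) x' y') = star x ⬝ᵥ y := by
    simp [x', y', inner, dotProduct, mul_comm]
  have h2 := norm_inner_le_norm (𝕜 := ℂ) x' y'
  rw [h1] at h2
  have h3 : Complex.normSq (star x ⬝ᵥ y) = ‖star x ⬝ᵥ y‖^2 := by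
    rw [Complex.normSq_eq_norm_sq]
  have hnx : ‖x'‖^2 = ∑ i, Complex.normSq (x i) := by
    rw [EuclideanSpace.norm_eq,
      Real.sq_sqrt (Finset.sum_nonneg fun i _ => sq_nonneg _)]
    refine Finset.sum_congr rfl fun i _ => ?_
    exact Complex.sq_norm _
  have hny : ‖y'‖^2 = ∑ i, Complex.normSq (y i) := by
    rw [EuclideanSpace.norm_eq,
      Real.sq_sqrt (Finset.sum_nonneg fun i _ => sq_nonneg _)]
    refine Finset.sum_congr rfl fun i _ => ?_
    exact Complex.sq_norm _
  calc Complex.normSq (star x ⬝ᵥ y) = ‖star x ⬝ᵥ y‖^2 := h3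
    _ ≤ (‖x'‖ * ‖y'‖)^2 := by apply pow_le_pow_left₀ (norm_nonneg _) h2
    _ = _ := by rw [mul_pow, hnx, hny]

lemma sqrt_dot {N : ℕ} {Q : Matrix (Fin N) (Fin N) ℂ} (hQ : Q.PosSemidef)
    (a b : Fin N → ℂ) :
    star a ⬝ᵥ Q.mulVec b = star (hQ.sqrt.mulVec a) ⬝ᵥ (hQ.sqrt.mulVec b) := by
  set S := hQ.sqrt with hS
  have hQeq : Q = S * S := by rw [hS, ← pow_two, hQ.sq_sqrt]
  have hherm : Sᴴ = S := hQ.posSemidef_sqrt.1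
  rw [hQeq, ← mulVec_mulVec, star_mulVec, hherm, dotProduct_mulVec]

lemma dot_self_normSq {N : ℕ} (v : Fin N → ℂ) :
    star v ⬝ᵥ v = ((∑ i, Complex.normSq (v i) : ℝ) : ℂ) := by
  simp only [dotProduct, Pi.star_apply, Complex.ofReal_sum]
  refine Finset.sum_congr rfl fun i _ => ?_
  rw [← Complex.mul_conj (v i), mul_comm]; rfl

lemma powerGain_eq_sum {N : ℕ} {Q : Matrix (Fin N) (Fin N) ℂ} (hQ : Q.PosSemidef)
    (a : Fin N → ℂ) : powerGain Q a = ∑ i, Complex.normSq (hQ.sqrt.mulVec a i) := by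
  rw [powerGain, sqrt_dot hQ, dot_self_normSq, Complex.ofReal_re]

lemma powerGain_nonneg {N : ℕ} {Q : Matrix (Fin N) (Fin N) ℂ} (hQ : Q.PosSemidef)
    (a : Fin N → ℂ) : 0 ≤ powerGain Q a := by
  rw [powerGain_eq_sum hQ]
  exact Finset.sum_nonneg fun i _ => Complex.normSq_nonneg _

lemma dot_self_complex {N : ℕ} {Q : Matrix (Fin N) (Fin N) ℂ} (hQ : Q.PosSemidef)
    (a : Fin N → ℂ) : star a ⬝ᵥ Q.mulVec a = ((powerGain Q a : ℝ) : ℂ) := by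
  rw [sqrt_dot hQ a a, dot_self_normSq, powerGain_eq_sum hQ]

lemma psd_cs {N : ℕ} {Q : Matrix (Fin N) (Fin N) ℂ} (hQ : Q.PosSemidef) (a b : Fin N → ℂ) :
    Complex.normSq (star a ⬝ᵥ Q.mulVec b) ≤ powerGain Q a * powerGain Q b := by
  rw [sqrt_dot hQ, powerGain_eq_sum hQ, powerGain_eq_sum hQ]
  exact dot_cs _ _

lemma mulVec_normSq_le {N : ℕ} (M : Matrix (Fin N) (Fin N) ℂ) (v : Fin N → ℂ) :
    ∑ i, Complex.normSq (M.mulVec v i) ≤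
      (∑ i, ∑ j, Complex.normSq (M i j)) * ∑ j, Complex.normSq (v j) := by
  rw [Finset.sum_mul]
  refine Finset.sum_le_sum fun i _ => ?_
  have h := dot_cs (star (M i)) v
  rw [star_star] at h
  calc Complex.normSq (M.mulVec v i) = Complex.normSq (M i ⬝ᵥ v) := rfl
    _ ≤ (∑ j, Complex.normSq (star (M i) j)) * ∑ j, Complex.normSq (v j) := h
    _ = (∑ j, Complex.normSq (M i j)) * ∑ j, Complex.normSq (v j) := by
        congr 1; exact Finset.sum_congr rfl fun j _ => Complex.normSq_conj _

lemma mulVec_self_bound {N : ℕ} {Q : Matrix (Fin N) (Fin N) ℂ} (hQ : Q.PosSemidef)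
    (h : Fin N → ℂ) :
    ∑ i, Complex.normSq (Q.mulVec h i) ≤ Q.trace.re * powerGain Q h := by
  set S := hQ.sqrt with hS
  have hQeq : Q = S * S := by rw [hS, ← pow_two, hQ.sq_sqrt]
  have hherm : Sᴴ = S := hQ.posSemidef_sqrt.1
  have htr : Q.trace.re = ∑ i, ∑ j, Complex.normSq (S i j) := by
    rw [hQeq, trace]
    have : ∀ i, (S * S) i i = ((∑ j, Complex.normSq (S i j) : ℝ) : ℂ) := by
      intro i
      simp only [mul_apply, Complex.ofReal_sum]
      refine Finset.sum_congr rfl fun j _ => ?_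
      have : S j i = starRingEnd ℂ (S i j) := by
        conv_lhs => rw [← hherm]
        rfl
      rw [this, Complex.mul_conj]
    simp only [diag_apply, this, ← Complex.ofReal_sum, Complex.ofReal_re]
  have hmv : Q.mulVec h = S.mulVec (S.mulVec h) := by
    rw [hQeq, ← mulVec_mulVec]
  rw [hmv, htr, powerGain_eq_sum hQ]
  exact mulVec_normSq_le S (S.mulVec h)

lemma exists_beamformer {N : ℕ} {Q : Matrix (Fin N) (Fin N) ℂ} (hQ : Q.PosSemidef)
    (htr : Q.trace.re ≤ 1) (h0 : Fin N → ℂ) :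
    ∃ w : Fin N → ℂ, (∑ i, Complex.normSq (w i)) ≤ 1 ∧
      Complex.normSq (star h0 ⬝ᵥ w) = powerGain Q h0 ∧
      ∀ hk : Fin N → ℂ, Complex.normSq (star hk ⬝ᵥ w) ≤ powerGain Q hk := by
  rcases eq_or_lt_of_le (powerGain_nonneg hQ h0) with hg0 | hgpos
  · refine ⟨0, by simp, ?_, fun hk => ?_⟩
    · rw [show (star h0 ⬝ᵥ (0 : Fin N → ℂ)) = 0 by simp [dotProduct],
        Complex.normSq_zero]
      exact hg0
    · rw [show (star hk ⬝ᵥ (0 : Fin N → ℂ)) = 0 by simp [dotProduct],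
        Complex.normSq_zero]
      exact powerGain_nonneg hQ hk
  · set c : ℝ := (Real.sqrt (powerGain Q h0))⁻¹ with hc
    have hcc : c * c = (powerGain Q h0)⁻¹ := by
      rw [hc, ← mul_inv, Real.mul_self_sqrt (le_of_lt hgpos)]
    have hgne : powerGain Q h0 ≠ 0 := ne_of_gt hgpos
    refine ⟨(c : ℂ) • Q.mulVec h0, ?_, ?_, ?_⟩
    · calc ∑ i, Complex.normSq (((c : ℂ) • Q.mulVec h0) i)
          = (powerGain Q h0)⁻¹ * ∑ i, Complex.normSq (Q.mulVec h0 i) := by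
            rw [Finset.mul_sum]
            refine Finset.sum_congr rfl fun i _ => ?_
            rw [Pi.smul_apply, smul_eq_mul, Complex.normSq_mul,
              Complex.normSq_ofReal, hcc]
        _ ≤ (powerGain Q h0)⁻¹ * (Q.trace.re * powerGain Q h0) :=
            mul_le_mul_of_nonneg_left (mulVec_self_bound hQ h0)
              (inv_nonneg.2 (le_of_lt hgpos))
        _ = Q.trace.re := by field_simp
        _ ≤ 1 := htr
    · rw [dotProduct_smul, smul_eq_mul, Complex.normSq_mul, Complex.normSq_ofReal,
        hcc, dot_self_complex hQ, Complex.normSq_ofReal]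
      field_simp
    · intro hk
      rw [dotProduct_smul, smul_eq_mul, Complex.normSq_mul, Complex.normSq_ofReal, hcc]
      calc (powerGain Q h0)⁻¹ * Complex.normSq (star hk ⬝ᵥ Q.mulVec h0)
          ≤ (powerGain Q h0)⁻¹ * (powerGain Q hk * powerGain Q h0) :=
            mul_le_mul_of_nonneg_left (psd_cs hQ hk h0)
              (inv_nonneg.2 (le_of_lt hgpos))
        _ = powerGain Q hk := by field_simp


lemma u_mono {K : ℕ} (u : (Fin K → ℝ) → ℝ) (k : Fin K)
    (hinc : ∀ (x : Fin K → ℝ), (∀ j, 0 ≤ x j) → ∀ t t' : ℝ, 0 ≤ t → t < t' →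
      u (Function.update x k t) < u (Function.update x k t'))
    (hdec : ∀ l, l ≠ k → ∀ (x : Fin K → ℝ), (∀ j, 0 ≤ x j) → ∀ t t' : ℝ, 0 ≤ t → t < t' →
      u (Function.update x l t') < u (Function.update x l t))
    (x x' : Fin K → ℝ) (hx : ∀ j, 0 ≤ x j) (hx' : ∀ j, 0 ≤ x' j)
    (hk : x k ≤ x' k) (hl : ∀ l, l ≠ k → x' l ≤ x l) : u x ≤ u x' := by
  have key : ∀ s : Finset (Fin K), u x ≤ u (fun j => if j ∈ s then x' j else x j) := by
    intro s
    induction s using Finset.induction_on with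
    | empty => simp
    | @insert a s ha ih =>
      set z : Fin K → ℝ := fun j => if j ∈ s then x' j else x j with hz
      have hznn : ∀ j, 0 ≤ z j := by
        intro j; rw [hz]; dsimp only; split <;> [exact hx' j; exact hx j]
      have h1 : (fun j => if j ∈ insert a s then x' j else x j) =
          Function.update z a (x' a) := by
        funext j
        by_cases hj : j = a
        · subst hj; simp [Function.update]
        · simp [Function.update, hj, hz, Finset.mem_insert]
      have h2 : z = Function.update z a (x a) := by
        have : z a = x a := by rw [hz]; simp [ha]
        rw [← this, Function.update_eq_self]
      refine le_trans ih ?_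
      rw [h1, h2]
      rw [show Function.update (Function.update z a (x a)) a (x' a) =
        Function.update z a (x' a) from Function.update_idem ..]
      by_cases hak : a = k
      · subst hak
        rcases lt_or_eq_of_le hk with hlt | heq
        · exact le_of_lt (hinc z hznn (x a) (x' a) (hx a) hlt)
        · rw [heq]
      · rcases lt_or_eq_of_le (hl a hak) with hlt | heq
        · exact le_of_lt (hdec a hak z hznn (x' a) (x a) (hx' a) hlt)
        · rw [heq]
  have := key Finset.univ
  simpa using this

lemma rankOne_dot {N : ℕ} (w x y : Fin N → ℂ) :
    star x ⬝ᵥ (vecMulVec w (star w)).mulVec y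
      = (star x ⬝ᵥ w) * (star w ⬝ᵥ y) := by
  have hmv : (vecMulVec w (star w)).mulVec y = fun i => w i * (star w ⬝ᵥ y) := by
    funext i
    simp only [mulVec, vecMulVec_apply, dotProduct, Pi.star_apply]
    rw [Finset.mul_sum]
    refine Finset.sum_congr rfl fun j _ => by ring
  rw [hmv]
  simp only [dotProduct, Pi.star_apply]
  rw [Finset.sum_mul]
  refine Finset.sum_congr rfl fun j _ => by ring

lemma star_dot_conj {N : ℕ} (w x : Fin N → ℂ) :
    star w ⬝ᵥ x = starRingEnd ℂ (star x ⬝ᵥ w) := by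
  simp only [dotProduct, Pi.star_apply, map_sum, _root_.map_mul]
  exact Finset.sum_congr rfl fun i _ => by simp [mul_comm]

lemma rankOne_dot_self {N : ℕ} (w x : Fin N → ℂ) :
    (star x ⬝ᵥ w) * (star w ⬝ᵥ x) = ((Complex.normSq (star x ⬝ᵥ w) : ℝ) : ℂ) := by
  rw [mul_comm, star_dot_conj w x, mul_comm, Complex.mul_conj]

lemma rankOne_posSemidef {N : ℕ} (w : Fin N → ℂ) :
    (vecMulVec w (star w)).PosSemidef := by
  refine PosSemidef.of_dotProduct_mulVec_nonneg ?_ ?_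
  · ext i j
    simp only [conjTranspose_apply, vecMulVec_apply, Pi.star_apply, star_mul', star_star]
    ring
  · intro x
    rw [rankOne_dot, rankOne_dot_self]
    exact_mod_cast Complex.normSq_nonneg _

lemma rankOne_trace {N : ℕ} (w : Fin N → ℂ) :
    (vecMulVec w (star w)).trace.re = ∑ i, Complex.normSq (w i) := by
  rw [trace]
  have : ∀ i, (vecMulVec w (star w)).diag i = ((Complex.normSq (w i) : ℝ) : ℂ) := by
    intro i
    simp only [diag_apply, vecMulVec_apply, Pi.star_apply]
    rw [← Complex.mul_conj]; rfl
  simp only [this, ← Complex.ofReal_sum, Complex.ofReal_re]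

lemma rankOne_powerGain {N : ℕ} (w h : Fin N → ℂ) :
    powerGain (vecMulVec w (star w)) h = Complex.normSq (star h ⬝ᵥ w) := by
  rw [powerGain, rankOne_dot, rankOne_dot_self, Complex.ofReal_re]

/-- Every Pareto optimal point of the utility region of a `K`-user MISO interference
channel is achieved by an admissible tuple of rank-one correlation matrices
`Q_k = w_k w_kᴴ` with `‖w_k‖ ≤ 1` (single-stream beamforming). -/
theorem pareto_achieved_by_rank_one
    (N K : ℕ)
    (h : Fin K → Fin K → (Fin N → ℂ))  -- `h l k` : channel from transmitter `l` to receiver `k`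
    (u : Fin K → (Fin K → ℝ) → ℝ)
    (hu_nonneg : ∀ k (x : Fin K → ℝ), (∀ j, 0 ≤ x j) → 0 ≤ u k x)
    (hu_inc : ∀ k (x : Fin K → ℝ), (∀ j, 0 ≤ x j) →
      ∀ t t' : ℝ, 0 ≤ t → t < t' →
        u k (Function.update x k t) < u k (Function.update x k t'))
    (hu_dec : ∀ k l, l ≠ k → ∀ (x : Fin K → ℝ), (∀ j, 0 ≤ x j) →
      ∀ t t' : ℝ, 0 ≤ t → t < t' →
        u k (Function.update x l t') < u k (Function.update x l t))
    (𝒰 : Set (Fin K → ℝ))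
    (h𝒰 : 𝒰 = {pt | ∃ Q : Fin K → Matrix (Fin N) (Fin N) ℂ, Admissible Q ∧
        pt = fun k => u k (fun l => powerGain (Q l) (h l k))})
    (pt : Fin K → ℝ) (hpt : pt ∈ 𝒰)
    (hPareto : ¬ ∃ pt' ∈ 𝒰, (∀ k, pt k ≤ pt' k) ∧ (∃ k, pt k < pt' k)) :
    ∃ w : Fin K → (Fin N → ℂ),
      (∀ k, ∑ i, Complex.normSq (w k i) ≤ 1) ∧
      pt = fun k => u k (fun l => Complex.normSq (star (h l k) ⬝ᵥ w l)) := by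
  subst h𝒰
  obtain ⟨Q, hQadm, hpteq⟩ := hpt
  choose w hw1 hw2 hw3 using fun l => exists_beamformer (hQadm l).1 (hQadm l).2 (h l l)
  refine ⟨w, hw1, ?_⟩
  set pt' : Fin K → ℝ := fun k => u k (fun l => Complex.normSq (star (h l k) ⬝ᵥ w l))
    with hpt'
  have hmem : pt' ∈ {pt | ∃ Q : Fin K → Matrix (Fin N) (Fin N) ℂ, Admissible Q ∧
      pt = fun k => u k (fun l => powerGain (Q l) (h l k))} := by
    refine ⟨fun l => vecMulVec (w l) (star (w l)), fun l => ⟨rankOne_posSemidef _, ?_⟩, ?_⟩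
    · rw [rankOne_trace]; exact hw1 l
    · funext k
      rw [hpt']
      dsimp only
      congr 1
      funext l
      rw [rankOne_powerGain]
  have hle : ∀ k, pt k ≤ pt' k := by
    intro k
    rw [hpteq, hpt']
    refine u_mono (u k) k (hu_inc k) (fun l hl => hu_dec k l hl) _ _
      (fun l => powerGain_nonneg (hQadm l).1 _)
      (fun l => Complex.normSq_nonneg _) ?_ ?_
    · rw [hw2 k]
    · intro l _
      exact hw3 l (h l k)
  push_neg at hPareto
  have hge : ∀ k, pt' k ≤ pt k := hPareto pt' hmem hle
  funext k
  exact le_antisymm (hle k) (hge k)
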